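/- For relation triples A and B, the norm of the sequential composition equals the product of the norms: ‖A;B‖ = ‖A‖ · ‖B‖. In particular, ‖A;B‖ ≥ ‖A‖ · ‖B‖: if S ⊆ A₊ × B₊ has the property that for every x ∈ A₋ and every ρ : A₊ → B₋ there is (a,b) ∈ S with A(x,a) and B(ρ(a),b), then |S| ≥ ‖A‖ · ‖B‖. -/
import Mathlib


open Cardinal

universe u

/-- The norm of a relation triple `(α, β, A)`: the least cardinality of a set
`Z ⊆ β` such that every `x : α` is `A`-related to some member of `Z`. -/
noncomputable def rnorm {α β : Type u} (A : α → β → Prop) : Cardinal.{u} :=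
  sInf { c | ∃ Z : Set β, (∀ x : α, ∃ z ∈ Z, A x z) ∧ c = #Z }

/-- The dual relation: `A^⊥ = (A₊, A₋, {(z,x) : ¬ A(x,z)})`. -/
def dualRel {α β : Type u} (A : α → β → Prop) : β → α → Prop :=
  fun z x => ¬ A x z

/-- The relation part of the sequential composition `A;B`, with minus part
`α × (β → γ)` and plus part `β × δ`. -/
def seqComp {α β γ δ : Type u} (A : α → β → Prop) (B : γ → δ → Prop) :
    α × (β → γ) → β × δ → Prop :=
  fun p q => A p.1 q.1 ∧ B (p.2 q.1) q.2

lemma rnorm_le_of_cover {α β : Type u} (A : α → β → Prop) (Z : Set β)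
    (h : ∀ x : α, ∃ z ∈ Z, A x z) : rnorm A ≤ #Z :=
  csInf_le (OrderBot.bddBelow _) ⟨Z, h, rfl⟩

lemma lower_bound {α β γ δ : Type u} (A : α → β → Prop) (B : γ → δ → Prop)
    (S : Set (β × δ))
    (hS : ∀ (x : α) (ρ : β → γ), ∃ p ∈ S, A x p.1 ∧ B (ρ p.1) p.2) :
    rnorm A * rnorm B ≤ #S := by
  rcases isEmpty_or_nonempty γ with hγ | hγ
  · have hB0 : rnorm B = 0 := by
      have h1 : rnorm B ≤ #(∅ : Set δ) :=
        rnorm_le_of_cover B ∅ (fun x => (hγ.false x).elim)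
      simpa using h1
    simp [hB0]
  · set U : Set β := {u | ∀ c : γ, ∃ w : δ, (u, w) ∈ S ∧ B c w} with hU
    have hcov : ∀ x : α, ∃ u ∈ U, A x u := by
      intro x
      by_contra hx
      push_neg at hx
      have key : ∀ u : β, ∃ c : γ, A x u → ∀ w : δ, (u, w) ∈ S → ¬ B c w := by
        intro u
        by_cases hu : A x u
        · have hnu : u ∉ U := fun h => hx u h hu
          simp only [hU, Set.mem_setOf_eq] at hnu
          push_neg at hnu
          obtain ⟨c, hc⟩ := hnu
          exact ⟨c, fun _ w hw => hc w hw⟩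
        · exact ⟨Classical.arbitrary γ, fun h => absurd h hu⟩
      choose ρ hρ using key
      obtain ⟨⟨u, w⟩, hpS, hpA, hpB⟩ := hS x ρ
      exact hρ u hpA w hpS hpB
    have h1 : rnorm A ≤ #U := rnorm_le_of_cover A U hcov
    have h2 : ∀ u : U, rnorm B ≤ #{w : δ | (u.1, w) ∈ S} := by
      rintro ⟨u, hu⟩
      refine rnorm_le_of_cover B _ (fun c => ?_)
      obtain ⟨w, hw, hb⟩ := hu c
      exact ⟨w, hw, hb⟩
    calc rnorm A * rnorm B ≤ #U * rnorm B := mul_le_mul_left h1 _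
      _ = Cardinal.sum (fun _ : U => rnorm B) := (Cardinal.sum_const' _ _).symm
      _ ≤ Cardinal.sum (fun u : U => #{w : δ | (u.1, w) ∈ S}) :=
          Cardinal.sum_le_sum _ _ h2
      _ = #(Σ u : U, {w : δ | (u.1, w) ∈ S}) := (Cardinal.mk_sigma _).symm
      _ ≤ #S := by
          refine Cardinal.mk_le_of_injective
            (f := fun q : Σ u : U, {w : δ | (u.1, w) ∈ S} =>
              (⟨(q.1.1, q.2.1), q.2.2⟩ : S)) ?_
          rintro ⟨⟨u1, hu1⟩, ⟨w1, hw1⟩⟩ ⟨⟨u2, hu2⟩, ⟨w2, hw2⟩⟩ h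
          simp only [Subtype.mk.injEq, Prod.mk.injEq] at h
          obtain ⟨h1, h2⟩ := h
          subst h1; subst h2; rfl

/-- `‖A;B‖ = ‖A‖ · ‖B‖`; in particular, any `S ⊆ A₊ × B₊` witnessing the norm
condition for `A;B` has cardinality at least `‖A‖ · ‖B‖`. -/
theorem stmt16 {α β γ δ : Type u} (A : α → β → Prop) (B : γ → δ → Prop)
    (hA₁ : ∀ x : α, ∃ y : β, A x y) (hA₂ : ¬ ∃ y : β, ∀ x : α, A x y)
    (hB₁ : ∀ x : γ, ∃ y : δ, B x y) (hB₂ : ¬ ∃ y : δ, ∀ x : γ, B x y) :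
    rnorm (seqComp A B) = rnorm A * rnorm B ∧
    ∀ S : Set (β × δ),
      (∀ (x : α) (ρ : β → γ), ∃ p ∈ S, A x p.1 ∧ B (ρ p.1) p.2) →
      rnorm A * rnorm B ≤ #S := by
  have hlow := lower_bound A B
  constructor
  · -- equality
    have hAne : { c | ∃ Z : Set β, (∀ x : α, ∃ z ∈ Z, A x z) ∧ c = #Z }.Nonempty :=
      ⟨#(Set.univ : Set β), Set.univ,
        fun x => ⟨(hA₁ x).choose, Set.mem_univ _, (hA₁ x).choose_spec⟩, rfl⟩
    have hBne : { c | ∃ Z : Set δ, (∀ x : γ, ∃ z ∈ Z, B x z) ∧ c = #Z }.Nonempty :=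
      ⟨#(Set.univ : Set δ), Set.univ,
        fun x => ⟨(hB₁ x).choose, Set.mem_univ _, (hB₁ x).choose_spec⟩, rfl⟩
    obtain ⟨ZA, hZA, hZAeq⟩ := csInf_mem hAne
    obtain ⟨ZB, hZB, hZBeq⟩ := csInf_mem hBne
    have hCne : { c | ∃ Z : Set (β × δ),
        (∀ x : α × (β → γ), ∃ z ∈ Z, seqComp A B x z) ∧ c = #Z }.Nonempty := by
      refine ⟨#(Set.univ : Set (β × δ)), Set.univ, ?_, rfl⟩
      rintro ⟨x, ρ⟩
      obtain ⟨u, hu⟩ := hA₁ x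
      obtain ⟨w, hw⟩ := hB₁ (ρ u)
      exact ⟨(u, w), Set.mem_univ _, hu, hw⟩
    obtain ⟨SC, hSC, hSCeq⟩ := csInf_mem hCne
    refine le_antisymm ?_ ?_
    · -- upper bound via product of minimal covers
      have hcov : ∀ x : α × (β → γ), ∃ z ∈ ZA ×ˢ ZB, seqComp A B x z := by
        rintro ⟨x, ρ⟩
        obtain ⟨u, huZ, hu⟩ := hZA x
        obtain ⟨w, hwZ, hw⟩ := hZB (ρ u)
        exact ⟨(u, w), Set.mk_mem_prod huZ hwZ, hu, hw⟩
      have := rnorm_le_of_cover (seqComp A B) (ZA ×ˢ ZB) hcov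
      have hmk : #(ZA ×ˢ ZB : Set (β × δ)) = #ZA * #ZB := by
        rw [Cardinal.mk_congr (Equiv.Set.prod ZA ZB), Cardinal.mk_prod,
          Cardinal.lift_id, Cardinal.lift_id]
      rw [hmk] at this
      rw [show rnorm A = #ZA from hZAeq, show rnorm B = #ZB from hZBeq]
      exact this
    · -- lower bound via the minimal cover of the composition
      have hS' : ∀ (x : α) (ρ : β → γ), ∃ p ∈ SC, A x p.1 ∧ B (ρ p.1) p.2 := by
        intro x ρ
        obtain ⟨q, hq, h⟩ := hSC (x, ρ)
        exact ⟨q, hq, h.1, h.2⟩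
      have := hlow SC hS'
      rw [show rnorm (seqComp A B) = #SC from hSCeq]
      exact this
  · exact hlow
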